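/- arXiv:1801.07940 — 4 statements merged into one kernel-verified Lean document; each statement's English description precedes it below -/
import Mathlib

section
/- Let E be a real vector space, a, b, c, c₁, c₂ distinct points of E, Δ = conv{a, c₁, c₂}, f : Δ → ℝ affine, and η ∈ ℝ. Suppose b ∈ F := {x ∈ Δ : f(x) ≥ η}, a ∉ F, and f(c), f(c₁), f(c₂) > η. Assume (A1) c₁ − a and c₁ − c₂ are linearly independent, and (A2) b lies in the open segment between a and c, and c lies in the open segment between c₁ and c₂. Then b is not an extreme point of F. -/
set_option maxHeartbeats 1000000

lemma combo3 {E : Type*} [AddCommGroup E] [Module ℝ E] {s : Set E} (hs : Convex ℝ s)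
    {a b c : E} (ha : a ∈ s) (hb : b ∈ s) (hc : c ∈ s)
    {x y z : ℝ} (hx : 0 ≤ x) (hy : 0 ≤ y) (hz : 0 ≤ z) (hsum : x + y + z = 1) :
    x • a + y • b + z • c ∈ s := by
  rcases eq_or_lt_of_le (add_nonneg hy hz) with h | h
  · have hy0 : y = 0 := by nlinarith
    have hz0 : z = 0 := by nlinarith
    have hx1 : x = 1 := by linarith
    simpa [hy0, hz0, hx1] using ha
  · have hq : (y / (y + z)) • b + (z / (y + z)) • c ∈ s :=
      hs hb hc (by positivity) (by positivity) (by field_simp)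
    have h2 := hs ha hq hx (le_of_lt h) (by linarith)
    have hyz : (y + z) • ((y / (y + z)) • b + (z / (y + z)) • c) = y • b + z • c := by
      rw [smul_add, smul_smul, smul_smul,
        mul_div_cancel₀ _ (ne_of_gt h), mul_div_cancel₀ _ (ne_of_gt h)]
    rwa [hyz, ← add_assoc] at h2

/-- the triangle lemma: under assumptions (A1) and (A2), the point `b`
is not an extreme point of `F = {x ∈ Δ : f x ≥ η}`. -/
theorem stmt3 {E : Type*} [AddCommGroup E] [Module ℝ E]
    (a b c c₁ c₂ : E)
    (hdist : List.Pairwise (· ≠ ·) [a, b, c, c₁, c₂])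
    (f : E →ᵃ[ℝ] ℝ) (η : ℝ)
    (Δ : Set E) (hΔ : Δ = convexHull ℝ {a, c₁, c₂})
    (F : Set E) (hF : F = {x ∈ Δ | η ≤ f x})
    (hbF : b ∈ F) (haF : a ∉ F)
    (hc : η < f c) (hc1 : η < f c₁) (hc2 : η < f c₂)
    (hli : LinearIndependent ℝ ![c₁ - a, c₁ - c₂])
    (hbseg : b ∈ openSegment ℝ a c) (hcseg : c ∈ openSegment ℝ c₁ c₂) :
    b ∉ F.extremePoints ℝ := by
  subst hΔ hF
  obtain ⟨hbΔ, hfb⟩ := hbF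
  have haΔ : a ∈ convexHull ℝ ({a, c₁, c₂} : Set E) :=
    subset_convexHull ℝ _ (by simp)
  have hc₁Δ : c₁ ∈ convexHull ℝ ({a, c₁, c₂} : Set E) :=
    subset_convexHull ℝ _ (by simp)
  have hc₂Δ : c₂ ∈ convexHull ℝ ({a, c₁, c₂} : Set E) :=
    subset_convexHull ℝ _ (by simp)
  have hfa : f a < η := by
    by_contra h
    exact haF ⟨haΔ, not_lt.1 h⟩
  obtain ⟨ta, tc, hta, htc, htac, hbdef⟩ := hbseg
  obtain ⟨s₁, s₂, hs₁, hs₂, hs12, hcdef⟩ := hcseg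
  set u : ℝ := ta with hu
  set v : ℝ := tc * s₁ with hv
  set r : ℝ := tc * s₂ with hr
  have hu0 : 0 < u := hta
  have hv0 : 0 < v := mul_pos htc hs₁
  have hr0 : 0 < r := mul_pos htc hs₂
  have huvr : u + v + r = 1 := by
    rw [hu, hv, hr]; nlinarith
  have hb' : b = u • a + v • c₁ + r • c₂ := by
    rw [← hbdef, ← hcdef, hu, hv, hr]
    module
  set α : ℝ := f c₂ - f c₁ with hα
  set β : ℝ := f c₁ - f a with hβdef
  have hβ : 0 < β := by rw [hβdef]; linarith
  set w : E := α • (c₁ - a) + β • (c₁ - c₂) with hw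
  have hw0 : w ≠ 0 := by
    intro h
    have := (LinearIndependent.pair_iff.1 hli α β h).2
    linarith
  have hfw : f.linear w = 0 := by
    have h1 : f.linear (c₁ - a) = f c₁ - f a := f.linearMap_vsub c₁ a
    have h2 : f.linear (c₁ - c₂) = f c₁ - f c₂ := f.linearMap_vsub c₁ c₂
    rw [hw, map_add, map_smul, map_smul, h1, h2, smul_eq_mul, smul_eq_mul, hα, hβdef]
    ring
  set M : ℝ := |α| + |α + β| + |β| + 1 with hM
  have hM0 : 0 < M := by positivity
  set ε : ℝ := min u (min v r) / M with hε
  have hε0 : 0 < ε := by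
    apply div_pos _ hM0
    exact lt_min hu0 (lt_min hv0 hr0)
  have hMα : |α| ≤ M := by
    rw [hM]; linarith [abs_nonneg (α + β), abs_nonneg β]
  have hMαβ : |α + β| ≤ M := by
    rw [hM]; linarith [abs_nonneg α, abs_nonneg β]
  have hMβ : |β| ≤ M := by
    rw [hM]; linarith [abs_nonneg α, abs_nonneg (α + β)]
  have hεu : ε * |α| ≤ u := by
    have h1 : ε * M ≤ u := by
      rw [hε, div_mul_cancel₀ _ (ne_of_gt hM0)]
      exact (min_le_left _ _)
    exact le_trans (mul_le_mul_of_nonneg_left hMα hε0.le) h1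
  have hεv : ε * |α + β| ≤ v := by
    have h1 : ε * M ≤ v := by
      rw [hε, div_mul_cancel₀ _ (ne_of_gt hM0)]
      exact le_trans (min_le_right _ _) (min_le_left _ _)
    exact le_trans (mul_le_mul_of_nonneg_left hMαβ hε0.le) h1
  have hεr : ε * |β| ≤ r := by
    have h1 : ε * M ≤ r := by
      rw [hε, div_mul_cancel₀ _ (ne_of_gt hM0)]
      exact le_trans (min_le_right _ _) (min_le_right _ _)
    exact le_trans (mul_le_mul_of_nonneg_left hMβ hε0.le) h1
  -- the two witness points
  set p : E := b + ε • w with hp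
  set q : E := b - ε • w with hq
  have habs1 : α ≤ |α| := le_abs_self α
  have habs1' : -|α| ≤ α := neg_abs_le α
  have habs2 : α + β ≤ |α + β| := le_abs_self _
  have habs2' : -|α + β| ≤ α + β := neg_abs_le _
  have habs3 : β ≤ |β| := le_abs_self β
  have habs3' : -|β| ≤ β := neg_abs_le β
  have hεα : |ε * α| ≤ u := by
    rw [abs_mul, abs_of_pos hε0]; exact hεu
  have hpΔ : p ∈ convexHull ℝ ({a, c₁, c₂} : Set E) := by
    have hexp : p = (u - ε * α) • a + (v + ε * (α + β)) • c₁ + (r - ε * β) • c₂ := by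
      rw [hp, hb', hw]; module
    rw [hexp]
    apply combo3 (convex_convexHull ℝ _) haΔ hc₁Δ hc₂Δ
    · linarith [mul_le_mul_of_nonneg_left habs1 hε0.le, hεu]
    · linarith [mul_le_mul_of_nonneg_left habs2' hε0.le, hεv]
    · linarith [mul_le_mul_of_nonneg_left habs3 hε0.le, hεr]
    · linarith [huvr]
  have hqΔ : q ∈ convexHull ℝ ({a, c₁, c₂} : Set E) := by
    have hexp : q = (u + ε * α) • a + (v - ε * (α + β)) • c₁ + (r + ε * β) • c₂ := by
      rw [hq, hb', hw]; module
    rw [hexp]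
    apply combo3 (convex_convexHull ℝ _) haΔ hc₁Δ hc₂Δ
    · linarith [mul_le_mul_of_nonneg_left habs1' hε0.le, hεu]
    · linarith [mul_le_mul_of_nonneg_left habs2 hε0.le, hεv]
    · linarith [mul_le_mul_of_nonneg_left habs3' hε0.le, hεr]
    · linarith [huvr]
  have hfp : f p = f b := by
    rw [hp, add_comm, ← vadd_eq_add, f.map_vadd, map_smul, hfw]
    simp
  have hfq : f q = f b := by
    rw [hq, sub_eq_add_neg, add_comm, ← vadd_eq_add, f.map_vadd, map_neg, map_smul, hfw]
    simp
  have hpF : p ∈ {x ∈ convexHull ℝ ({a, c₁, c₂} : Set E) | η ≤ f x} := ⟨hpΔ, by rw [hfp]; exact hfb⟩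
  have hqF : q ∈ {x ∈ convexHull ℝ ({a, c₁, c₂} : Set E) | η ≤ f x} := ⟨hqΔ, by rw [hfq]; exact hfb⟩
  intro hext
  have hbmid : b ∈ openSegment ℝ p q := by
    refine ⟨1/2, 1/2, by norm_num, by norm_num, by norm_num, ?_⟩
    rw [hp, hq]; module
  have := hext.2 hpF hqF hbmid
  have hpb : p ≠ b := by
    rw [hp]
    intro h
    have : ε • w = 0 := by
      have := congrArg (· - b) h
      simpa [add_sub_cancel_left] using this
    exact (smul_ne_zero (ne_of_gt hε0) hw0) this
  exact hpb this
end

section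
/- Let X be a compact convex subset of a Hausdorff locally convex topological real vector space, and let f : X → ℝ be an upper semicontinuous affine function with f ≤ 0 on the set of extreme points of X. Then f ≤ 0 on X. -/
/-- Superlevel sets of an upper semicontinuous function on a closed set are closed. -/
lemma usc_superlevel_closed {E : Type*} [TopologicalSpace E] {X : Set E} {f : E → ℝ}
    (hXcl : IsClosed X) (husc : UpperSemicontinuousOn f X) (c : ℝ) :
    IsClosed {y | y ∈ X ∧ c ≤ f y} := by
  rw [← isOpen_compl_iff]
  rw [isOpen_iff_mem_nhds]
  intro z hz
  by_cases hzX : z ∈ X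
  · have hfz : f z < c := by
      by_contra h
      exact hz ⟨hzX, le_of_not_gt h⟩
    have := husc z hzX c hfz
    rw [nhdsWithin, Filter.eventually_inf_principal] at this
    filter_upwards [this] with y hy hyc
    exact absurd (hy hyc.1) (not_lt.2 hyc.2)
  · filter_upwards [hXcl.isOpen_compl.mem_nhds hzX] with y hy hyc
    exact hy hyc.1

/-- minimum principle for upper semicontinuous affine functions on a
compact convex subset of a Hausdorff locally convex real TVS. -/
theorem stmt5 {E : Type*} [AddCommGroup E] [Module ℝ E] [TopologicalSpace E]
    [IsTopologicalAddGroup E] [ContinuousSMul ℝ E] [T2Space E] [LocallyConvexSpace ℝ E]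
    (X : Set E) (hXc : IsCompact X) (hXconv : Convex ℝ X)
    (f : E → ℝ)
    (haff : ∀ x ∈ X, ∀ y ∈ X, ∀ t : ℝ, 0 ≤ t → t ≤ 1 →
      f (t • x + (1 - t) • y) = t * f x + (1 - t) * f y)
    (husc : UpperSemicontinuousOn f X)
    (hext : ∀ x ∈ X.extremePoints ℝ, f x ≤ 0) :
    ∀ x ∈ X, f x ≤ 0 := by
  intro x₀ hx₀
  have hXcl : IsClosed X := hXc.isClosed
  -- the max of f on X is attained at some point y
  have hne : Nonempty X := ⟨⟨x₀, hx₀⟩⟩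
  set t : X → Set E := fun x => {y | y ∈ X ∧ f x ≤ f y} with ht
  have htcl : ∀ x : X, IsClosed (t x) := fun x =>
    usc_superlevel_closed hXcl husc (f x)
  obtain ⟨y, hy⟩ : (⋂ x : X, t x).Nonempty := by
    apply IsCompact.nonempty_iInter_of_directed_nonempty_isCompact_isClosed t
    · intro a b
      rcases le_total (f a) (f b) with h | h
      · exact ⟨b, fun z hz => ⟨hz.1, h.trans hz.2⟩, fun z hz => hz⟩
      · exact ⟨a, fun z hz => hz, fun z hz => ⟨hz.1, h.trans hz.2⟩⟩
    · exact fun x => ⟨x, x.2, le_rfl⟩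
    · exact fun x => hXc.of_isClosed_subset (htcl x) (fun z hz => hz.1)
    · exact htcl
  simp only [Set.mem_iInter, ht, Set.mem_setOf_eq] at hy
  have hyX : y ∈ X := (hy ⟨x₀, hx₀⟩).1
  have hmax : ∀ x ∈ X, f x ≤ f y := fun x hx => (hy ⟨x, hx⟩).2
  -- the max set S is compact, convex, nonempty, and extreme in X
  set S : Set E := {z | z ∈ X ∧ f y ≤ f z} with hS
  have hScl : IsClosed S := usc_superlevel_closed hXcl husc (f y)
  have hScomp : IsCompact S := hXc.of_isClosed_subset hScl (fun z hz => hz.1)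
  have hSconv : Convex ℝ S := by
    intro a ha b hb s u hs hu hsu
    have hu' : u = 1 - s := by linarith
    refine ⟨hXconv ha.1 hb.1 hs hu hsu, ?_⟩
    rw [hu', haff a ha.1 b hb.1 s hs (by linarith)]
    nlinarith [ha.2, hb.2]
  have hSext : IsExtreme ℝ X S := by
    refine ⟨fun z hz => hz.1, ?_⟩
    rintro a ha b hb z hz ⟨s, u, hs, hu, hsu, rfl⟩
    have hu' : u = 1 - s := by linarith
    have heq : s * f a + (1 - s) * f b = f (s • a + u • b) := by
      rw [hu', haff a ha b hb s hs.le (by linarith)]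
    have hfa := hmax a ha
    have hfb := hmax b hb
    have hz2 := hz.2
    exact ⟨ha, by nlinarith⟩
  -- S has an extreme point, which is an extreme point of X
  obtain ⟨z, hz⟩ := hScomp.extremePoints_nonempty ⟨y, hyX, le_rfl⟩
  have hzX : z ∈ X.extremePoints ℝ := hSext.extremePoints_subset_extremePoints hz
  have : f y ≤ f z := (extremePoints_subset hz).2
  exact (hmax x₀ hx₀).trans (this.trans (hext z hzX))
end

section
/- Let X be a nonempty compact convex subset of a Hausdorff locally convex real topological vector space and let f : X → ℝ be an affine function whose set C(f) of points of continuity is dense in X. Then C(f) ∩ extremePoints(X) is dense in extremePoints(X). -/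
open Set Filter Topology

set_option linter.unusedSectionVars false
set_option linter.unusedVariables false
set_option maxHeartbeats 1000000

section Aux

variable {E : Type*} [AddCommGroup E] [Module ℝ E] [TopologicalSpace E]
    [IsTopologicalAddGroup E] [ContinuousSMul ℝ E] [T2Space E] [LocallyConvexSpace ℝ E]

lemma stmt7_isCompact_convexJoin {s t : Set E} (hs : IsCompact s) (ht : IsCompact t) :
    IsCompact (convexJoin ℝ s t) := by
  have heq : convexJoin ℝ s t =
      (fun p : ℝ × E × E => (1 - p.1) • p.2.1 + p.1 • p.2.2) '' (Icc (0:ℝ) 1 ×ˢ s ×ˢ t) := by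
    ext x
    constructor
    · intro hx
      obtain ⟨a, ha, b, hb, hx⟩ := mem_convexJoin.mp hx
      rw [segment_eq_image] at hx
      obtain ⟨θ, hθ, hx⟩ := hx
      exact ⟨(θ, a, b), ⟨hθ, ha, hb⟩, hx⟩
    · rintro ⟨⟨θ, a, b⟩, ⟨hθ, ha, hb⟩, hx⟩
      exact mem_convexJoin.mpr ⟨a, ha, b, hb, by rw [segment_eq_image]; exact ⟨θ, hθ, hx⟩⟩
  rw [heq]
  refine (isCompact_Icc.prod (hs.prod ht)).image ?_
  fun_prop

lemma stmt7_closure_convexHull_closure (S : Set E) :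
    closure (convexHull ℝ (closure S)) = closure (convexHull ℝ S) := by
  refine Subset.antisymm ?_ (closure_mono (convexHull_mono subset_closure))
  have h1 : convexHull ℝ (closure S) ⊆ closure (convexHull ℝ S) :=
    convexHull_min (closure_mono (subset_convexHull ℝ S)) (convex_convexHull ℝ S).closure
  simpa using closure_mono h1

lemma stmt7_isCompact_convexHull_finite_union {ι : Type*} (t : Finset ι) (D : ι → Set E)
    (hDc : ∀ i ∈ t, IsCompact (D i)) (hDconv : ∀ i ∈ t, Convex ℝ (D i)) :
    IsCompact (convexHull ℝ (⋃ i ∈ t, D i)) := by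
  classical
  induction t using Finset.induction with
  | empty => simp
  | @insert a s ha ih =>
    rw [Finset.set_biUnion_insert]
    rcases (⋃ i ∈ s, D i).eq_empty_or_nonempty with h | h
    · rw [h, union_empty, (hDconv a (Finset.mem_insert_self a s)).convexHull_eq]
      exact hDc a (Finset.mem_insert_self a s)
    · rcases (D a).eq_empty_or_nonempty with h2 | h2
      · rw [h2, empty_union]
        exact ih (fun i hi => hDc i (Finset.mem_insert_of_mem hi))
          (fun i hi => hDconv i (Finset.mem_insert_of_mem hi))
      · rw [convexHull_union h2 h, (hDconv a (Finset.mem_insert_self a s)).convexHull_eq]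
        exact stmt7_isCompact_convexJoin (hDc a (Finset.mem_insert_self a s))
          (ih (fun i hi => hDc i (Finset.mem_insert_of_mem hi))
            (fun i hi => hDconv i (Finset.mem_insert_of_mem hi)))

lemma stmt7_extreme_mem_finite_union {K : Set E} (hKconv : Convex ℝ K) {ι : Type*}
    (t : Finset ι) (D : ι → Set E) (hDK : ∀ i ∈ t, D i ⊆ K) (hDconv : ∀ i ∈ t, Convex ℝ (D i))
    {e : E} (he : e ∈ K.extremePoints ℝ) (hmem : e ∈ convexHull ℝ (⋃ i ∈ t, D i)) :
    ∃ i ∈ t, e ∈ D i := by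
  classical
  induction t using Finset.induction with
  | empty => simp at hmem
  | @insert a s ha ih =>
    rw [Finset.set_biUnion_insert] at hmem
    rcases (⋃ i ∈ s, D i).eq_empty_or_nonempty with h | h
    · rw [h, union_empty, (hDconv a (Finset.mem_insert_self a s)).convexHull_eq] at hmem
      exact ⟨a, Finset.mem_insert_self a s, hmem⟩
    rcases (D a).eq_empty_or_nonempty with h2 | h2
    · rw [h2, empty_union] at hmem
      obtain ⟨i, hi, hei⟩ := ih (fun i hi => hDK i (Finset.mem_insert_of_mem hi))
        (fun i hi => hDconv i (Finset.mem_insert_of_mem hi)) hmem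
      exact ⟨i, Finset.mem_insert_of_mem hi, hei⟩
    rw [convexHull_union h2 h, (hDconv a (Finset.mem_insert_self a s)).convexHull_eq] at hmem
    obtain ⟨p, hp, q, hq, hseg⟩ := mem_convexJoin.mp hmem
    have hpK : p ∈ K := hDK a (Finset.mem_insert_self a s) hp
    have hqK : q ∈ K := by
      have hsub : convexHull ℝ (⋃ i ∈ s, D i) ⊆ K :=
        convexHull_min (iUnion₂_subset fun i hi => hDK i (Finset.mem_insert_of_mem hi)) hKconv
      exact hsub hq
    rw [segment_eq_image] at hseg
    obtain ⟨θ, ⟨hθ0, hθ1⟩, hx⟩ := hseg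
    rcases eq_or_lt_of_le hθ0 with h0 | h0
    · have hpe : p = e := by rw [← h0] at hx; simpa using hx
      exact ⟨a, Finset.mem_insert_self a s, hpe ▸ hp⟩
    rcases eq_or_lt_of_le hθ1 with h1 | h1
    · have hq' : q = e := by rw [h1] at hx; simpa using hx
      obtain ⟨i, hi, hei⟩ := ih (fun i hi => hDK i (Finset.mem_insert_of_mem hi))
        (fun i hi => hDconv i (Finset.mem_insert_of_mem hi)) (hq' ▸ hq)
      exact ⟨i, Finset.mem_insert_of_mem hi, hei⟩
    · have hseg' : e ∈ openSegment ℝ p q := by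
        rw [openSegment_eq_image]
        exact ⟨θ, ⟨h0, h1⟩, hx⟩
      obtain ⟨hpe, hqe⟩ := (mem_extremePoints.mp he).2 p hpK q hqK hseg'
      exact ⟨a, Finset.mem_insert_self a s, hpe ▸ hp⟩


lemma stmt7_milman {T : Set E} (hT : IsCompact T)
    (hK : IsCompact (closure (convexHull ℝ T))) :
    (closure (convexHull ℝ T)).extremePoints ℝ ⊆ T := by
  classical
  set K := closure (convexHull ℝ T) with hKdef
  have hKconv : Convex ℝ K := (convex_convexHull ℝ T).closure
  intro e he
  by_contra heT
  -- for each y ∈ T, a convex neighbourhood N y with e ∉ closure (N y)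
  have key : ∀ y ∈ T, ∃ N : Set E, N ∈ 𝓝 y ∧ Convex ℝ N ∧ e ∉ closure N := by
    intro y hy
    have hey : e ≠ y := fun h => heT (h ▸ hy)
    obtain ⟨u, v, hu, hv, heu, hyv, huv⟩ := t2_separation hey
    obtain ⟨N, ⟨hN, hNconv⟩, hNv⟩ :=
      ((LocallyConvexSpace.convex_basis (𝕜 := ℝ) y).mem_iff).mp (hv.mem_nhds hyv)
    refine ⟨N, hN, hNconv, fun hecl => ?_⟩
    obtain ⟨w, hwu, hwN⟩ := mem_closure_iff.mp hecl u hu heu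
    exact (disjoint_left.mp huv hwu) (hNv hwN)
  choose! N hN hNconv heN using key
  obtain ⟨t, htT, htcover⟩ := hT.elim_nhds_subcover N (fun y hy => hN y hy)
  set D : E → Set E := fun y => closure (convexHull ℝ (T ∩ closure (N y))) with hD
  have hDsub : ∀ y ∈ T, D y ⊆ closure (N y) := by
    intro y hy
    exact closure_minimal (convexHull_min inter_subset_right (hNconv y hy).closure)
      isClosed_closure
  have hDK : ∀ y, D y ⊆ K :=
    fun y => closure_mono (convexHull_mono inter_subset_left)
  have hDc : ∀ y, IsCompact (D y) :=
    fun y => hK.of_isClosed_subset isClosed_closure (hDK y)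
  have hDconv : ∀ y, Convex ℝ (D y) := fun y => (convex_convexHull ℝ _).closure
  have hTsub : T ⊆ ⋃ y ∈ t, D y := by
    intro x hx
    obtain ⟨y, hyt, hxy⟩ := mem_iUnion₂.mp (htcover hx)
    exact mem_iUnion₂.mpr ⟨y, hyt, subset_closure (subset_convexHull ℝ _ ⟨hx, subset_closure hxy⟩)⟩
  have hJc : IsCompact (convexHull ℝ (⋃ y ∈ t, D y)) :=
    stmt7_isCompact_convexHull_finite_union t D (fun i _ => hDc i) (fun i _ => hDconv i)
  have hKJ : K ⊆ convexHull ℝ (⋃ y ∈ t, D y) :=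
    closure_minimal (convexHull_min (hTsub.trans (subset_convexHull ℝ _))
      (convex_convexHull ℝ _)) hJc.isClosed
  obtain ⟨i, hit, hei⟩ := stmt7_extreme_mem_finite_union hKconv t D
    (fun i _ => hDK i) (fun i _ => hDconv i) he (hKJ (extremePoints_subset he))
  exact heN i (htT i hit) ((hDsub i (htT i hit)) hei)

lemma stmt7_slice {X : Set E} (hXc : IsCompact X) (hXconv : Convex ℝ X) {e : E}
    (he : e ∈ X.extremePoints ℝ) {G : Set E} (hG : IsOpen G) (heG : e ∈ G) :
    ∃ (ψ : E →L[ℝ] ℝ) (β : ℝ), β < ψ e ∧ ∀ y ∈ X, β ≤ ψ y → y ∈ G := by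
  rcases (X \ G).eq_empty_or_nonempty with h | h
  · refine ⟨0, -1, by norm_num, fun y hy _ => ?_⟩
    by_contra hyG
    exact (eq_empty_iff_forall_notMem.mp h y) ⟨hy, hyG⟩
  set T := X \ G with hT
  have hTclosed : IsClosed T := hXc.isClosed.inter hG.isClosed_compl
  have hTc : IsCompact T := hXc.of_isClosed_subset hTclosed diff_subset
  set K := closure (convexHull ℝ T) with hK
  have hKX : K ⊆ X := closure_minimal (convexHull_min diff_subset hXconv) hXc.isClosed
  have hKc : IsCompact K := hXc.of_isClosed_subset isClosed_closure hKX
  have hKconv : Convex ℝ K := (convex_convexHull ℝ T).closure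
  have heK : e ∉ K := by
    intro heK
    have h1 : e ∈ K.extremePoints ℝ :=
      inter_extremePoints_subset_extremePoints_of_subset hKX ⟨heK, he⟩
    have h2 : e ∈ T := stmt7_milman hTc hKc h1
    exact h2.2 heG
  obtain ⟨g, u, hgu, hyu⟩ := geometric_hahn_banach_point_closed hKconv isClosed_closure heK
  refine ⟨-g, -u, by simpa using hgu, fun y hy hby => ?_⟩
  by_contra hyG
  have hyK : y ∈ K := subset_closure (subset_convexHull ℝ T ⟨hy, hyG⟩)
  have := hyu y hyK
  simp only [ContinuousLinearMap.neg_apply, neg_le_neg_iff] at hby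
  linarith

variable {X : Set E} {f : E → ℝ}

lemma stmt7_transfer (hXconv : Convex ℝ X)
    (haff : ∀ x ∈ X, ∀ y ∈ X, ∀ t : ℝ, 0 ≤ t → t ≤ 1 →
      f (t • x + (1 - t) • y) = t * f x + (1 - t) * f y)
    {a c : E} (ha : a ∈ X) (hc : c ∈ X) {θ : ℝ} (hθ0 : 0 < θ) (hθ1 : θ ≤ 1)
    (hcont : ContinuousWithinAt f X ((1 - θ) • a + θ • c)) :
    ContinuousWithinAt f X c := by
  set g : E → E := fun w => (1 - θ) • a + θ • w with hg
  have hgc : Continuous g := by fun_prop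
  have hmaps : MapsTo g X X := by
    intro w hw
    exact hXconv ha hw (by linarith) hθ0.le (by ring)
  have h1 : ContinuousWithinAt (f ∘ g) X c := by
    refine ContinuousWithinAt.comp ?_ hgc.continuousWithinAt hmaps
    exact hcont
  have heq : ∀ w ∈ X, (f ∘ g) w = (1 - θ) * f a + θ * f w := by
    intro w hw
    have := haff a ha w hw (1 - θ) (by linarith) (by linarith)
    simpa using this
  have h2 : ContinuousWithinAt (fun w => (1 - θ) * f a + θ * f w) X c :=
    h1.congr (fun w hw => (heq w hw).symm) ((heq c hc).symm)
  have h3 : ContinuousWithinAt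
      (fun w => (((1 - θ) * f a + θ * f w) - (1 - θ) * f a) * θ⁻¹) X c := by
    refine ContinuousWithinAt.mul ?_ continuousWithinAt_const
    exact h2.sub continuousWithinAt_const
  have hfun : (fun w => (((1 - θ) * f a + θ * f w) - (1 - θ) * f a) * θ⁻¹) = f := by
    funext w
    field_simp
    ring
  rwa [hfun] at h3

def stmt7_bad (X : Set E) (f : E → ℝ) (n : ℕ) : Set E :=
  {x | x ∈ X ∧ ∀ N ∈ 𝓝 x, ∃ u ∈ N ∩ X, ∃ v ∈ N ∩ X, 1 / (n + 1 : ℝ) ≤ f u - f v}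

lemma stmt7_bad_subset (n : ℕ) : stmt7_bad X f n ⊆ X := fun _ hx => hx.1

lemma stmt7_bad_closed (hXc : IsCompact X) (n : ℕ) : IsClosed (stmt7_bad X f n) := by
  refine isClosed_of_closure_subset ?_
  intro x hx
  have hxX : x ∈ X := by
    have : closure (stmt7_bad X f n) ⊆ closure X := closure_mono (stmt7_bad_subset n)
    exact hXc.isClosed.closure_subset (this hx)
  refine ⟨hxX, fun N hN => ?_⟩
  obtain ⟨x', hx'N, hx'b⟩ := mem_closure_iff.mp hx (interior N) isOpen_interior
    (mem_interior_iff_mem_nhds.mpr hN)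
  obtain ⟨u, hu, v, hv, huv⟩ := hx'b.2 (interior N) (isOpen_interior.mem_nhds hx'N)
  exact ⟨u, ⟨interior_subset hu.1, hu.2⟩, v, ⟨interior_subset hv.1, hv.2⟩, huv⟩

lemma stmt7_bad_convex (hXconv : Convex ℝ X)
    (haff : ∀ x ∈ X, ∀ y ∈ X, ∀ t : ℝ, 0 ≤ t → t ≤ 1 →
      f (t • x + (1 - t) • y) = t * f x + (1 - t) * f y)
    (n : ℕ) : Convex ℝ (stmt7_bad X f n) := by
  intro x hx y hy a b ha hb hab
  rcases eq_or_lt_of_le ha with ha0 | ha0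
  · have : b = 1 := by linarith
    simpa [← ha0, this] using hy
  rcases eq_or_lt_of_le hb with hb0 | hb0
  · have : a = 1 := by linarith
    simpa [← hb0, this] using hx
  have hzX : a • x + b • y ∈ X := hXconv hx.1 hy.1 ha hb hab
  refine ⟨hzX, fun N hN => ?_⟩
  -- use continuity of the combination map
  have hcomb : Continuous (fun p : E × E => a • p.1 + b • p.2) := by fun_prop
  have hmem : (fun p : E × E => a • p.1 + b • p.2) ⁻¹' N ∈ 𝓝 (x, y) := by
    apply hcomb.continuousAt.preimage_mem_nhds
    simpa using hN
  obtain ⟨P, hP, Q, hQ, hPQ⟩ := mem_nhds_prod_iff.mp hmem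
  obtain ⟨u₁, hu₁, v₁, hv₁, h1⟩ := hx.2 P hP
  obtain ⟨u₂, hu₂, v₂, hv₂, h2⟩ := hy.2 Q hQ
  have hcomb_aff : ∀ w₁ ∈ X, ∀ w₂ ∈ X, f (a • w₁ + b • w₂) = a * f w₁ + b * f w₂ := by
    intro w₁ hw₁ w₂ hw₂
    have hb' : b = 1 - a := by linarith
    have := haff w₁ hw₁ w₂ hw₂ a ha (by linarith)
    rw [hb']
    simpa using this
  refine ⟨a • u₁ + b • u₂, ⟨hPQ (mk_mem_prod hu₁.1 hu₂.1), hXconv hu₁.2 hu₂.2 ha hb hab⟩,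
    a • v₁ + b • v₂, ⟨hPQ (mk_mem_prod hv₁.1 hv₂.1), hXconv hv₁.2 hv₂.2 ha hb hab⟩, ?_⟩
  rw [hcomb_aff u₁ hu₁.2 u₂ hu₂.2, hcomb_aff v₁ hv₁.2 v₂ hv₂.2]
  have key : a * (f u₁ - f v₁) + b * (f u₂ - f v₂) ≥ a * (1 / (n+1:ℝ)) + b * (1 / (n+1:ℝ)) := by
    have := mul_le_mul_of_nonneg_left h1 ha0.le
    have := mul_le_mul_of_nonneg_left h2 hb0.le
    nlinarith
  have : a * (1 / (n+1:ℝ)) + b * (1 / (n+1:ℝ)) = 1 / (n+1:ℝ) := by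
    field_simp
    linarith
  nlinarith [key]

lemma stmt7_bad_not_cont (n : ℕ) {x : E} (hx : x ∈ stmt7_bad X f n) :
    ¬ ContinuousWithinAt f X x := by
  intro hcont
  have hball : {y | dist (f y) (f x) < 1 / (2 * (n + 1 : ℝ))} ∈ 𝓝[X] x := by
    have : Metric.ball (f x) (1 / (2 * (n + 1 : ℝ))) ∈ 𝓝 (f x) :=
      Metric.ball_mem_nhds _ (by positivity)
    exact hcont this
  obtain ⟨N, hNopen, hxN, hNsub⟩ := mem_nhdsWithin.mp hball
  obtain ⟨u, hu, v, hv, huv⟩ := hx.2 N (hNopen.mem_nhds hxN)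
  have hu' := hNsub ⟨hu.1, hu.2⟩
  have hv' := hNsub ⟨hv.1, hv.2⟩
  simp only [mem_setOf_eq, Real.dist_eq] at hu' hv'
  have h2 : f u - f v < 1 / (n + 1 : ℝ) := by
    have := abs_lt.mp hu'
    have := abs_lt.mp hv'
    have h3 : (1:ℝ) / (2 * (n + 1)) + 1 / (2 * (n + 1)) = 1 / (n + 1) := by
      have hpos : (n + 1 : ℝ) ≠ 0 := by positivity
      rw [div_add_div _ _ (by positivity) (by positivity), div_eq_div_iff (by positivity) (by positivity)]
      ring
    linarith [(abs_lt.mp hu').1, (abs_lt.mp hu').2, (abs_lt.mp hv').1, (abs_lt.mp hv').2]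
  linarith

lemma stmt7_bad_cover {x : E} (hx : x ∈ X) (h : ∀ n, x ∉ stmt7_bad X f n) :
    ContinuousWithinAt f X x := by
  rw [ContinuousWithinAt, Metric.tendsto_nhds]
  intro ε hε
  by_contra hcon
  obtain ⟨n, hn⟩ := exists_nat_one_div_lt hε
  refine h n ⟨hx, fun N hN => ?_⟩
  have hfreq : ∃ y ∈ N ∩ X, ε ≤ dist (f y) (f x) := by
    by_contra hcc
    push_neg at hcc
    refine hcon ?_
    refine mem_nhdsWithin.mpr ⟨interior N, isOpen_interior, mem_interior_iff_mem_nhds.mpr hN, ?_⟩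
    intro y hy
    exact hcc y ⟨interior_subset hy.1, hy.2⟩
  obtain ⟨y, hyN, hyd⟩ := hfreq
  have hxN : x ∈ N ∩ X := ⟨mem_of_mem_nhds hN, hx⟩
  rw [Real.dist_eq] at hyd
  rcases le_or_gt (f x) (f y) with hc | hc
  · refine ⟨y, hyN, x, hxN, ?_⟩
    rw [abs_of_nonneg (by linarith)] at hyd
    linarith
  · refine ⟨x, hxN, y, hyN, ?_⟩
    rw [abs_of_neg (by linarith)] at hyd
    linarith


lemma stmt7_lemmaB (hXne : X.Nonempty) (hXc : IsCompact X) (hXconv : Convex ℝ X)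
    (haff : ∀ x ∈ X, ∀ y ∈ X, ∀ t : ℝ, 0 ≤ t → t ≤ 1 →
      f (t • x + (1 - t) • y) = t * f x + (1 - t) * f y)
    (hdense : X ⊆ closure {x ∈ X | ContinuousWithinAt f X x})
    {C : Set E} (hCc : IsCompact C) (hCconv : Convex ℝ C) (hCX : C ⊆ X)
    (hCZ : ∀ x ∈ C, ¬ ContinuousWithinAt f X x)
    {w : E} (hw : w ∈ X.extremePoints ℝ) {W : Set E} (hW : IsOpen W) (hwW : w ∈ W) :
    ∃ e ∈ X.extremePoints ℝ, e ∈ W ∧ e ∉ C := by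
  by_contra hcontra
  push_neg at hcontra
  set Z := {x ∈ X | ContinuousWithinAt f X x} with hZ
  set S := X.extremePoints ℝ \ W with hS
  set K₁ := closure (convexHull ℝ S) with hK₁
  have hSX : S ⊆ X := fun x hx => extremePoints_subset hx.1
  have hK₁X : K₁ ⊆ X := closure_minimal (convexHull_min hSX hXconv) hXc.isClosed
  have hK₁c : IsCompact K₁ := hXc.of_isClosed_subset isClosed_closure hK₁X
  have hK₁conv : Convex ℝ K₁ := (convex_convexHull ℝ S).closure
  -- w is not in K₁, by Milman's theorem
  have hwK₁ : w ∉ K₁ := by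
    intro hm
    have h1 : w ∈ K₁.extremePoints ℝ :=
      inter_extremePoints_subset_extremePoints_of_subset hK₁X ⟨hm, hw⟩
    have h2 : K₁ = closure (convexHull ℝ (closure S)) :=
      (stmt7_closure_convexHull_closure S).symm
    have hclSc : IsCompact (closure S) :=
      hXc.of_isClosed_subset isClosed_closure
        ((closure_minimal hSX hXc.isClosed))
    have h3 : w ∈ closure S := by
      refine stmt7_milman hclSc ?_ ?_
      · rw [← h2]; exact hK₁c
      · rw [← h2]; exact h1
    have h4 : closure S ⊆ Wᶜ :=
      closure_minimal (fun x hx => hx.2) hW.isClosed_compl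
    exact h4 h3 hwW
  -- a continuity point outside K₁
  have hz : ∃ z, z ∈ Z ∧ z ∉ K₁ := by
    by_contra hzc
    push_neg at hzc
    have hZK : closure Z ⊆ K₁ := closure_minimal (fun z hzZ => hzc z hzZ) isClosed_closure
    exact hwK₁ (hZK (hdense (extremePoints_subset hw)))
  obtain ⟨z, hzZ, hzK₁⟩ := hz
  -- extreme points are covered by K₁ ∪ C
  have hcover : X.extremePoints ℝ ⊆ K₁ ∪ C := by
    intro e he
    by_cases heW : e ∈ W
    · exact Or.inr (hcontra e he heW)
    · exact Or.inl (subset_closure (subset_convexHull ℝ S ⟨he, heW⟩))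
  -- the degenerate cases
  have hZne : Z.Nonempty := ⟨z, hzZ⟩
  rcases C.eq_empty_or_nonempty with hCe | hCne
  · rw [hCe] at hcontra
    exact (hcontra w hw hwW)
  rcases S.eq_empty_or_nonempty with hSe | hSne
  · -- then all extreme points are in C, hence X ⊆ C, contradicting z being a continuity point
    have hXC : X ⊆ C := by
      have h1 : X.extremePoints ℝ ⊆ C := by
        intro e he
        rcases hcover he with h | h
        · exfalso
          have hK₁e : K₁ = ∅ := by rw [hK₁, hSe]; simp
          rw [hK₁e] at h
          exact h
        · exact h
      calc X = closure (convexHull ℝ (X.extremePoints ℝ)) :=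
            (closure_convexHull_extremePoints hXc hXconv).symm
        _ ⊆ C := closure_minimal (convexHull_min h1 hCconv) hCc.isClosed
    exact hCZ z (hXC hzZ.1) hzZ.2
  have hK₁ne : K₁.Nonempty := hSne.mono (subset_closure.trans' (subset_convexHull ℝ S)).subset
  -- X is the convex join of K₁ and C
  have hXsub : X ⊆ convexJoin ℝ K₁ C := by
    have h1 : convexHull ℝ (X.extremePoints ℝ) ⊆ convexJoin ℝ K₁ C := by
      calc convexHull ℝ (X.extremePoints ℝ) ⊆ convexHull ℝ (K₁ ∪ C) := convexHull_mono hcover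
        _ = convexJoin ℝ (convexHull ℝ K₁) (convexHull ℝ C) := convexHull_union hK₁ne hCne
        _ = convexJoin ℝ K₁ C := by rw [hK₁conv.convexHull_eq, hCconv.convexHull_eq]
    have h2 : IsClosed (convexJoin ℝ K₁ C) := (stmt7_isCompact_convexJoin hK₁c hCc).isClosed
    calc X = closure (convexHull ℝ (X.extremePoints ℝ)) :=
          (closure_convexHull_extremePoints hXc hXconv).symm
      _ ⊆ convexJoin ℝ K₁ C := closure_minimal h1 h2
  obtain ⟨p, hp, q, hq, hseg⟩ := mem_convexJoin.mp (hXsub hzZ.1)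
  rw [segment_eq_image] at hseg
  obtain ⟨θ, ⟨hθ0, hθ1⟩, hzeq⟩ := hseg
  have hθ0' : 0 < θ := by
    rcases eq_or_lt_of_le hθ0 with h0 | h0
    · exfalso
      apply hzK₁
      have : p = z := by rw [← h0] at hzeq; simpa using hzeq
      exact this ▸ hp
    · exact h0
  have hcontq : ContinuousWithinAt f X q := by
    refine stmt7_transfer hXconv haff (hK₁X hp) (hCX hq) hθ0' hθ1 ?_
    have hzeq' : (1 - θ) • p + θ • q = z := hzeq
    rw [hzeq']
    exact hzZ.2
  exact hCZ q hq hcontq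

end Aux

/-- Lemma 1.2, from [ggms]: if the set `C(f)` of points of continuity
of an affine `f` is dense in `X`, then `C(f) ∩ ext X` is dense in `ext X`. -/
theorem stmt7 {E : Type*} [AddCommGroup E] [Module ℝ E] [TopologicalSpace E]
    [IsTopologicalAddGroup E] [ContinuousSMul ℝ E] [T2Space E] [LocallyConvexSpace ℝ E]
    (X : Set E) (hXne : X.Nonempty) (hXc : IsCompact X) (hXconv : Convex ℝ X)
    (f : E → ℝ)
    (haff : ∀ x ∈ X, ∀ y ∈ X, ∀ t : ℝ, 0 ≤ t → t ≤ 1 →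
      f (t • x + (1 - t) • y) = t * f x + (1 - t) * f y)
    (hdense : X ⊆ closure {x ∈ X | ContinuousWithinAt f X x}) :
    X.extremePoints ℝ ⊆
      closure ({x ∈ X | ContinuousWithinAt f X x} ∩ X.extremePoints ℝ) := by
  classical
  intro x0 hx0
  rw [mem_closure_iff]
  intro U hU hx0U
  -- choice of maximizers and minimizers of continuous linear functionals on X
  have hmaxex : ∀ φ : E →L[ℝ] ℝ, ∃ b, b ∈ X ∧ ∀ y ∈ X, φ y ≤ φ b := by
    intro φ
    obtain ⟨b, hbX, hb⟩ := hXc.exists_isMaxOn hXne φ.continuous.continuousOn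
    exact ⟨b, hbX, fun y hy => hb hy⟩
  choose mx hmxX hmxle using hmaxex
  have hminex : ∀ φ : E →L[ℝ] ℝ, ∃ b, b ∈ X ∧ ∀ y ∈ X, φ b ≤ φ y := by
    intro φ
    obtain ⟨b, hbX, hb⟩ := hXc.exists_isMinOn hXne φ.continuous.continuousOn
    exact ⟨b, hbX, fun y hy => hb hy⟩
  choose mn hmnX hmnle using hminex
  -- The inductive step producing the next functional
  have hstep : ∀ (φ : E →L[ℝ] ℝ) (k : ℕ), ∃ φ' : E →L[ℝ] ℝ,
      ∀ τ : ℝ, 0 < τ → 1/τ < (k:ℝ) + 2 → ∀ x ∈ X, φ' (mx φ') - 1/τ ≤ φ' x →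
        (φ (mx φ) - 1 < φ x ∧ x ∉ stmt7_bad X f k) := by
    intro φ k
    set M := φ (mx φ) with hM
    -- the face of maximizers of φ has an extreme point of X
    set F := X ∩ {x | M ≤ φ x} with hF
    have hFne : F.Nonempty := ⟨mx φ, hmxX φ, by simp only [mem_setOf_eq, hM, le_refl]⟩
    have hFclosed : IsClosed F :=
      hXc.isClosed.inter (isClosed_le continuous_const φ.continuous)
    have hFc : IsCompact F := hXc.of_isClosed_subset hFclosed inter_subset_left
    have hFext : IsExtreme ℝ X F := by
      constructor
      · exact inter_subset_left
      · rintro x₁ hx₁ x₂ hx₂ x ⟨hxX, hxM⟩ hseg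
        obtain ⟨a, b, ha, hb, hab, hx⟩ := hseg
        have hφx : a * φ x₁ + b * φ x₂ = φ x := by
          rw [← hx]; simp [map_add, map_smul, smul_eq_mul]
        have h1 : φ x₁ ≤ M := hmxle φ x₁ hx₁
        have h2 : φ x₂ ≤ M := hmxle φ x₂ hx₂
        have hxM' : M ≤ φ x := hxM
        refine And.left (b := x₂ ∈ F) ⟨?_, ?_⟩
        · refine ⟨hx₁, ?_⟩
          show M ≤ φ x₁
          have k1 : a * M ≤ a * φ x₁ := by
            have hb2 : b * φ x₂ ≤ b * M := mul_le_mul_of_nonneg_left h2 hb.le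
            have he1 : a * M = M - b * M := by
              rw [show a = 1 - b by linarith]; ring
            linarith
          exact le_of_mul_le_mul_left k1 ha
        · refine ⟨hx₂, ?_⟩
          show M ≤ φ x₂
          have k1 : b * M ≤ b * φ x₂ := by
            have ha2 : a * φ x₁ ≤ a * M := mul_le_mul_of_nonneg_left h1 ha.le
            have he1 : b * M = M - a * M := by
              rw [show b = 1 - a by linarith]; ring
            linarith
          exact le_of_mul_le_mul_left k1 hb
    obtain ⟨w, hwF⟩ := hFc.extremePoints_nonempty hFne
    have hwX : w ∈ X.extremePoints ℝ := hFext.extremePoints_subset_extremePoints hwF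
    have hwW : M - 1 < φ w := by
      have h := extremePoints_subset hwF
      have : M ≤ φ w := h.2
      linarith
    -- a good extreme point near the top
    have hbadc : IsCompact (stmt7_bad X f k) :=
      hXc.of_isClosed_subset (stmt7_bad_closed hXc k) (stmt7_bad_subset k)
    obtain ⟨e, heX, heW, heA⟩ := stmt7_lemmaB hXne hXc hXconv haff hdense hbadc
      (stmt7_bad_convex hXconv haff k) (stmt7_bad_subset k)
      (fun x hx => stmt7_bad_not_cont k hx) hwX
      (isOpen_lt continuous_const φ.continuous : IsOpen {x | M - 1 < φ x}) hwW
    -- a slice at e avoiding the bad set and staying near the top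
    set G := {x | M - 1 < φ x} ∩ (stmt7_bad X f k)ᶜ with hG
    have hGopen : IsOpen G :=
      (isOpen_lt continuous_const φ.continuous).inter (stmt7_bad_closed hXc k).isOpen_compl
    have heG : e ∈ G := ⟨heW, heA⟩
    obtain ⟨ψ, β, hψβ, hψsub⟩ := stmt7_slice hXc hXconv heX hGopen heG
    set P := ψ (mx ψ) with hP
    have hPβ : β < P := lt_of_lt_of_le hψβ (hmxle ψ e (extremePoints_subset heX))
    have hm0 : (0:ℝ) < P - β := by linarith
    set s := (M - φ (mn φ) + (k + 2)) / (P - β) with hs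
    have hO0 : 0 ≤ M - φ (mn φ) := by
      have := hmnle φ (mx φ) (hmxX φ)
      linarith
    have hs0 : 0 < s := by
      refine div_pos ?_ hm0
      positivity
    refine ⟨φ + s • ψ, ?_⟩
    intro τ hτ hτk x hxX hx
    have happ : ∀ y, (φ + s • ψ) y = φ y + s * ψ y := by
      intro y
      simp [ContinuousLinearMap.add_apply, ContinuousLinearMap.smul_apply, smul_eq_mul]
    have hM'low : φ (mn φ) + s * P ≤ (φ + s • ψ) (mx (φ + s • ψ)) := by
      have h1 : (φ + s • ψ) (mx ψ) ≤ (φ + s • ψ) (mx (φ + s • ψ)) :=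
        hmxle (φ + s • ψ) (mx ψ) (hmxX ψ)
      have h2 : φ (mn φ) ≤ φ (mx ψ) := hmnle φ (mx ψ) (hmxX ψ)
      rw [happ] at h1
      linarith
    have hψx : β < ψ x := by
      have h1 : φ x ≤ M := hmxle φ x hxX
      simp only [happ] at hx hM'low
      have h2 : s * P - (M - φ (mn φ)) - 1/τ ≤ s * ψ x := by linarith
      have h3 : s * (P - β) = M - φ (mn φ) + (k + 2) := by
        rw [hs]
        field_simp
      have h4 : s * (P - ψ x) < s * (P - β) := by
        rw [h3]
        linarith
      have h5 : P - ψ x < P - β := lt_of_mul_lt_mul_left h4 hs0.le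
      linarith
    have hres := hψsub x hxX hψx.le
    exact ⟨hres.1, hres.2⟩
  choose stepF hstepF using hstep
  -- the base functional localizing at x0 inside U
  obtain ⟨ψ₀, β₀, hβ₀, hsub₀⟩ := stmt7_slice hXc hXconv hx0 hU hx0U
  set P₀ := ψ₀ (mx ψ₀) with hP₀
  have hβP₀ : β₀ < P₀ := lt_of_lt_of_le hβ₀ (hmxle ψ₀ x0 (extremePoints_subset hx0))
  set s₀ := 2 / (P₀ - β₀) with hs₀
  have hs₀0 : 0 < s₀ := div_pos two_pos (by linarith)
  -- the recursively defined sequence of functionals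
  set Φ : ℕ → (E →L[ℝ] ℝ) := fun n => Nat.rec (s₀ • ψ₀) (fun k φ => stepF φ k) n with hΦdef
  have hΦ0 : Φ 0 = s₀ • ψ₀ := rfl
  have hkey : ∀ (k : ℕ) (τ : ℝ), 0 < τ → 1/τ < (k:ℝ) + 2 → ∀ x ∈ X,
      Φ (k+1) (mx (Φ (k+1))) - 1/τ ≤ Φ (k+1) x →
      (Φ k (mx (Φ k)) - 1 < Φ k x ∧ x ∉ stmt7_bad X f k) := fun k => hstepF (Φ k) k
  -- the nested near-maximum regions
  set R : ℕ → Set E := fun k => X ∩ {x | Φ k (mx (Φ k)) - 1 ≤ Φ k x} with hR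
  have hRX : ∀ k, R k ⊆ X := fun k => inter_subset_left
  have hRne : ∀ k, (R k).Nonempty := fun k => ⟨mx (Φ k), hmxX _, by simp⟩
  have hRclosed : ∀ k, IsClosed (R k) := fun k =>
    hXc.isClosed.inter (isClosed_le continuous_const (Φ k).continuous)
  have hRc : ∀ k, IsCompact (R k) := fun k => hXc.of_isClosed_subset (hRclosed k) (hRX k)
  have honelt : ∀ k : ℕ, 1/(1:ℝ) < (k:ℝ) + 2 := by
    intro k
    have : (0:ℝ) ≤ (k:ℝ) := Nat.cast_nonneg k
    norm_num
    linarith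
  have hRnested : ∀ k, R (k+1) ⊆ R k := by
    intro k x hx
    have h := hkey k 1 one_pos (honelt k) x hx.1 (by
      have := hx.2
      simpa using this)
    exact ⟨hx.1, h.1.le⟩
  have hRmono : ∀ j k, j ≤ k → R k ⊆ R j := by
    intro j k hjk
    induction hjk with
    | refl => exact subset_rfl
    | @step m hm ih =>
      exact (hRnested m).trans ih
  have hRbad : ∀ k, ∀ x ∈ R (k+1), x ∉ stmt7_bad X f k := by
    intro k x hx
    exact (hkey k 1 one_pos (honelt k) x hx.1 (by simpa using hx.2)).2
  -- the limit region
  set Rinf := ⋂ k, R k with hRinfdef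
  have hRinfne : Rinf.Nonempty :=
    IsCompact.nonempty_iInter_of_sequence_nonempty_isCompact_isClosed R hRnested hRne
      (hRc 0) hRclosed
  have hRinfX : Rinf ⊆ X := (iInter_subset R 0).trans (hRX 0)
  have hRinfc : IsCompact Rinf :=
    hXc.of_isClosed_subset (isClosed_iInter hRclosed) hRinfX
  have hRinfZ : ∀ x ∈ Rinf, ContinuousWithinAt f X x := by
    intro x hx
    refine stmt7_bad_cover (hRinfX hx) (fun n => ?_)
    exact hRbad n x (mem_iInter.mp hx (n+1))
  have hRinfU : Rinf ⊆ U := by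
    intro x hx
    have hx0' : x ∈ R 0 := mem_iInter.mp hx 0
    have happ0 : ∀ y, Φ 0 y = s₀ * ψ₀ y := by
      intro y
      rw [hΦ0]
      simp [ContinuousLinearMap.smul_apply, smul_eq_mul]
    have hmax0 : Φ 0 (mx (Φ 0)) = s₀ * P₀ := by
      have h1 : Φ 0 (mx (Φ 0)) ≤ s₀ * P₀ := by
        rw [happ0]
        exact mul_le_mul_of_nonneg_left (hmxle ψ₀ (mx (Φ 0)) (hmxX (Φ 0))) hs₀0.le
      have h2 : s₀ * P₀ ≤ Φ 0 (mx (Φ 0)) := by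
        have h3 := hmxle (Φ 0) (mx ψ₀) (hmxX ψ₀)
        rw [happ0] at h3
        linarith [h3]
      linarith
    have hx2 : s₀ * P₀ - 1 ≤ s₀ * ψ₀ x := by
      rw [← happ0 x, ← hmax0]
      exact hx0'.2
    have hψ₀x : β₀ < ψ₀ x := by
      have h3 : s₀ * (P₀ - ψ₀ x) ≤ 1 := by linarith
      have h4 : s₀ * (P₀ - β₀) = 2 := by
        rw [hs₀, div_mul_eq_mul_div, mul_div_assoc, div_self (by linarith : P₀ - β₀ ≠ 0), mul_one]
      have h5 : s₀ * (P₀ - ψ₀ x) < s₀ * (P₀ - β₀) := by rw [h4]; linarith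
      have h6 : P₀ - ψ₀ x < P₀ - β₀ := lt_of_mul_lt_mul_left h5 hs₀0.le
      linarith
    exact hsub₀ x (hRX 0 hx0') hψ₀x.le
  -- the extreme point of the limit region is an extreme point of X
  obtain ⟨e, he⟩ := hRinfc.extremePoints_nonempty hRinfne
  have heRinf : e ∈ Rinf := extremePoints_subset he
  have heX : e ∈ X.extremePoints ℝ := by
    refine mem_extremePoints.mpr ⟨hRinfX heRinf, ?_⟩
    intro x₁ hx₁ x₂ hx₂ hseg
    obtain ⟨a, b, ha, hb, hab, heq⟩ := hseg
    set τ := min a b with hτ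
    have hτ0 : 0 < τ := lt_min ha hb
    have hτa : τ ≤ a := min_le_left a b
    have hτb : τ ≤ b := min_le_right a b
    have hmem : ∀ k : ℕ, 1/τ < (k:ℝ) + 2 → x₁ ∈ R k ∧ x₂ ∈ R k := by
      intro k hk
      have he1 : e ∈ R (k+1) := mem_iInter.mp heRinf (k+1)
      have hlin : a * Φ (k+1) x₁ + b * Φ (k+1) x₂ = Φ (k+1) e := by
        rw [← heq]
        simp [map_add, map_smul, smul_eq_mul]
      have hA : Φ (k+1) x₁ ≤ Φ (k+1) (mx (Φ (k+1))) := hmxle _ x₁ hx₁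
      have hB : Φ (k+1) x₂ ≤ Φ (k+1) (mx (Φ (k+1))) := hmxle _ x₂ hx₂
      have hE : Φ (k+1) (mx (Φ (k+1))) - 1 ≤ Φ (k+1) e := he1.2
      have bound : ∀ y : E, y ∈ X → ∀ c c' : ℝ, 0 < c → c' = 1 - c → τ ≤ c →
          c * Φ (k+1) y + c' * Φ (k+1) (mx (Φ (k+1))) ≥ Φ (k+1) (mx (Φ (k+1))) - 1 →
          Φ (k+1) (mx (Φ (k+1))) - 1/τ ≤ Φ (k+1) y := by
        intro y hy c c' hc hc' hτc hbnd
        rw [hc'] at hbnd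
        have k1 : c * Φ (k+1) (mx (Φ (k+1))) - 1 ≤ c * Φ (k+1) y := by nlinarith [hbnd]
        have k2 : Φ (k+1) (mx (Φ (k+1))) - 1/c ≤ Φ (k+1) y := by
          rw [← mul_le_mul_iff_right₀ hc]
          have hcne : c ≠ 0 := ne_of_gt hc
          calc c * (Φ (k+1) (mx (Φ (k+1))) - 1/c) = c * Φ (k+1) (mx (Φ (k+1))) - 1 := by
                rw [mul_sub, mul_one_div, div_self hcne]
            _ ≤ c * Φ (k+1) y := k1
        have k3 : 1/c ≤ 1/τ := one_div_le_one_div_of_le hτ0 hτc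
        linarith
      have h1 : Φ (k+1) (mx (Φ (k+1))) - 1/τ ≤ Φ (k+1) x₁ := by
        refine bound x₁ hx₁ a b ha (by linarith) hτa ?_
        nlinarith
      have h2 : Φ (k+1) (mx (Φ (k+1))) - 1/τ ≤ Φ (k+1) x₂ := by
        refine bound x₂ hx₂ b a hb (by linarith) hτb ?_
        nlinarith
      exact ⟨⟨hx₁, (hkey k τ hτ0 hk x₁ hx₁ h1).1.le⟩, ⟨hx₂, (hkey k τ hτ0 hk x₂ hx₂ h2).1.le⟩⟩
    have hbig : ∀ j : ℕ, ∃ k : ℕ, j ≤ k ∧ 1/τ < (k:ℝ) + 2 := by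
      intro j
      refine ⟨j + Nat.ceil (1/τ), Nat.le_add_right j _, ?_⟩
      have h1 : 1/τ ≤ (Nat.ceil (1/τ) : ℝ) := Nat.le_ceil _
      have h2 : (Nat.ceil (1/τ) : ℝ) ≤ ((j + Nat.ceil (1/τ) : ℕ) : ℝ) := by
        exact_mod_cast Nat.le_add_left _ j
      linarith
    have hx₁R : x₁ ∈ Rinf := by
      rw [hRinfdef, mem_iInter]
      intro j
      obtain ⟨k, hjk, hk⟩ := hbig j
      exact hRmono j k hjk (hmem k hk).1
    have hx₂R : x₂ ∈ Rinf := by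
      rw [hRinfdef, mem_iInter]
      intro j
      obtain ⟨k, hjk, hk⟩ := hbig j
      exact hRmono j k hjk (hmem k hk).2
    exact (mem_extremePoints.mp he).2 x₁ hx₁R x₂ hx₂R ⟨a, b, ha, hb, hab, heq⟩
  exact ⟨e, hRinfU heRinf, ⟨⟨hRinfX heRinf, hRinfZ e heRinf⟩, heX⟩⟩
end

section
/- Let X be a compact convex set, x an extreme point of X such that {x} is a split face, and h_x the upper envelope of the characteristic function χ_{x}, i.e., h_x(z) = inf{h(z) : h ∈ A^c(X), h > χ_{x}}. Then h_x is upper semicontinuous, affine, h_x(x) = 1, and h_x = 0 on the complementary face {x}'. -/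
open Classical

set_option maxHeartbeats 1000000 in
/-- for an extreme point `x` of `X` such that `{x}` is a split face,
the upper envelope `h_x` of the characteristic function of `{x}` (infimum of
continuous affine functions strictly above it) is upper semicontinuous on `X`,
affine on `X`, takes the value `1` at `x` and vanishes on the complementary face. -/
theorem stmt15 {E : Type*} [AddCommGroup E] [Module ℝ E] [TopologicalSpace E]
    [IsTopologicalAddGroup E] [ContinuousSMul ℝ E] [T2Space E] [LocallyConvexSpace ℝ E]
    (X : Set E) (hXc : IsCompact X) (hXconv : Convex ℝ X)
    (x : E) (hx : x ∈ X.extremePoints ℝ)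
    (compl : Set E)
    (hcompl : compl = ⋃₀ {F : Set E | IsExtreme ℝ X F ∧ x ∉ F})
    (hsplit : Convex ℝ compl ∧ ∀ z ∈ X \ ({x} ∪ compl),
      ∃! p : ℝ × E, p.1 ∈ Set.Ioo (0 : ℝ) 1 ∧ p.2 ∈ compl ∧
        z = p.1 • x + (1 - p.1) • p.2)
    (hX : E → ℝ)
    (hhX : ∀ z, hX z = sInf {r : ℝ | ∃ h : E →ᵃ[ℝ] ℝ, ContinuousOn h X ∧
      (∀ w ∈ X, (if w = x then (1 : ℝ) else 0) < h w) ∧ r = h z}) :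
    UpperSemicontinuousOn hX X ∧
      (∀ p ∈ X, ∀ q ∈ X, ∀ t : ℝ, 0 ≤ t → t ≤ 1 →
        hX (t • p + (1 - t) • q) = t * hX p + (1 - t) * hX q) ∧
      hX x = 1 ∧ (∀ z ∈ compl, hX z = 0) := by
  obtain ⟨hcomplConv, huniq⟩ := hsplit
  have hxX : x ∈ X := hx.1
  have hcomplX : compl ⊆ X := by
    rw [hcompl]; rintro z ⟨F, ⟨hF, -⟩, hzF⟩; exact hF.1 hzF
  have hxnc : x ∉ compl := by
    rw [hcompl]; rintro ⟨F, ⟨-, hxF⟩, hxF'⟩; exact hxF hxF'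
  -- the set of values of admissible functions at z
  set S : E → Set ℝ := fun z => {r : ℝ | ∃ h : E →ᵃ[ℝ] ℝ, ContinuousOn h X ∧
      (∀ w ∈ X, (if w = x then (1 : ℝ) else 0) < h w) ∧ r = h z} with hS
  have hXS : ∀ z, hX z = sInf (S z) := hhX
  -- nonemptiness
  have hSne : ∀ z, (S z).Nonempty := by
    intro z
    refine ⟨(2 : ℝ), AffineMap.const ℝ E (2 : ℝ), continuous_const.continuousOn, ?_, rfl⟩
    intro w _
    split_ifs <;> norm_num
  -- lower bound 0
  have hSlb : ∀ z ∈ X, ∀ r ∈ S z, (0 : ℝ) ≤ r := by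
    rintro z hz r ⟨h, -, hgt, rfl⟩
    have := hgt z hz
    split_ifs at this <;> linarith
  have hBdd : ∀ z ∈ X, BddBelow (S z) := fun z hz => ⟨0, fun r hr => hSlb z hz r hr⟩
  -- any admissible h dominates the coefficient of any decomposition
  have hBnd : ∀ s : ℝ, 0 ≤ s → s ≤ 1 → ∀ w ∈ X, ∀ h : E →ᵃ[ℝ] ℝ,
      (∀ w ∈ X, (if w = x then (1 : ℝ) else 0) < h w) → s ≤ h (s • x + (1 - s) • w) := by
    intro s hs0 hs1 w hw h hgt
    have hcombo : h (s • x + (1 - s) • w) = s • h x + (1 - s) • h w :=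
      Convex.combo_affine_apply (by ring)
    have h1 : (1 : ℝ) < h x := by have := hgt x hxX; simpa using this
    have h2 : (0 : ℝ) ≤ h w := by
      have := hgt w hw; split_ifs at this <;> linarith
    rw [hcombo]; simp only [smul_eq_mul]; nlinarith
  -- the split coefficient, as an opaque function
  obtain ⟨lam, hlamx, hlamc, hlam3⟩ :
      ∃ lam : E → ℝ, lam x = 1 ∧ (∀ z ∈ compl, lam z = 0) ∧
        ∀ (z : E) (hz : z ∈ X \ ({x} ∪ compl)),
          lam z = (Classical.choose (huniq z hz).exists).1 := by
    refine ⟨fun z => if z = x then 1 else if z ∈ compl then 0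
      else if hz : z ∈ X \ ({x} ∪ compl) then (Classical.choose (huniq z hz).exists).1
      else 0, by simp, ?_, ?_⟩
    · intro z hz
      have hzx : z ≠ x := fun h => hxnc (h ▸ hz)
      simp only [if_neg hzx, if_pos hz]
    · intro z hz
      have h1 : z ≠ x := fun h => hz.2 (by simp [h])
      have h2 : z ∉ compl := fun h => hz.2 (by simp [h])
      simp only [if_neg h1, if_neg h2, dif_pos hz]
  have hmem3 : ∀ z ∈ X, z ≠ x → z ∉ compl → z ∈ X \ ({x} ∪ compl) := by
    intro z hz h1 h2
    exact ⟨hz, by simp [h1, h2]⟩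
  have hdecomp : ∀ z ∈ X, 0 ≤ lam z ∧ lam z ≤ 1 ∧ ∃ w ∈ X,
      (lam z = 1 ∨ w ∈ compl) ∧ z = lam z • x + (1 - lam z) • w := by
    intro z hz
    by_cases h1 : z = x
    · subst h1
      exact ⟨by rw [hlamx]; norm_num, by rw [hlamx], z, hz, Or.inl hlamx, by rw [hlamx]; module⟩
    by_cases h2 : z ∈ compl
    · refine ⟨by rw [hlamc z h2], by rw [hlamc z h2]; norm_num, z, hz, Or.inr h2, ?_⟩
      rw [hlamc z h2]; module
    · have hz3 := hmem3 z hz h1 h2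
      obtain ⟨hIoo, hwc, heq⟩ := Classical.choose_spec (huniq z hz3).exists
      rw [hlam3 z hz3] at *
      exact ⟨le_of_lt hIoo.1, le_of_lt hIoo.2, _, hcomplX hwc, Or.inr hwc, heq⟩
  -- no point of compl is a proper combination of x and a point of X
  have hface : ∀ z ∈ compl, ∀ s : ℝ, 0 < s → s ≤ 1 → ∀ w ∈ X, z ≠ s • x + (1 - s) • w := by
    intro z hz s hs0 hs1 w hw heq
    rw [hcompl] at hz
    obtain ⟨F, ⟨hF, hxF⟩, hzF⟩ := hz
    rcases eq_or_lt_of_le hs1 with h1 | h1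
    · subst h1
      have : z = x := by rw [heq]; module
      exact hxF (this ▸ hzF)
    · have hmem : z ∈ openSegment ℝ x w :=
        ⟨s, 1 - s, hs0, by linarith, by ring, heq.symm⟩
      exact hxF (hF.2 hxX hw hzF hmem)
  -- maximality of lam among decomposition coefficients
  have hmax : ∀ z ∈ X, ∀ s : ℝ, 0 ≤ s → s ≤ 1 → ∀ w ∈ X,
      z = s • x + (1 - s) • w → s ≤ lam z := by
    intro z hz s hs0 hs1 w hw heq
    by_cases h1 : z = x
    · rw [h1, hlamx]; exact hs1
    by_cases h2 : z ∈ compl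
    · rw [hlamc z h2]
      by_contra hc
      push_neg at hc
      exact hface z h2 s hc hs1 w hw heq
    · have hz3 := hmem3 z hz h1 h2
      obtain ⟨hIoo, hwc, hceq⟩ := Classical.choose_spec (huniq z hz3).exists
      rw [hlam3 z hz3]
      set c := (Classical.choose (huniq z hz3).exists).1
      -- s = 1 impossible
      rcases eq_or_lt_of_le hs1 with hs1' | hs1'
      · exact absurd (by rw [heq, hs1']; module) h1
      rcases eq_or_lt_of_le hs0 with hs0' | hs0'
      · linarith [hIoo.1]
      -- 0 < s < 1 ; decompose w
      by_cases hwx : w = x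
      · exact absurd (by rw [heq, hwx]; module) h1
      obtain ⟨hμ0, hμ1, v, hvX, hvor, hweq⟩ := hdecomp w hw
      rcases hvor with hμe | hvc
      · exact absurd (show w = x by rw [hweq, hμe]; module) hwx
      · -- z = (s + (1-s)*lam w) • x + (1 - (s + (1-s)*lam w)) • v
        set μ := lam w
        have hzeq : z = (s + (1 - s) * μ) • x + (1 - (s + (1 - s) * μ)) • v := by
          rw [heq, hweq]; module
        have hμ1' : μ < 1 := by
          rcases eq_or_lt_of_le hμ1 with h | h
          · exact absurd (show w = x by rw [hweq, h]; module) hwx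
          · exact h
        have hIoo' : s + (1 - s) * μ ∈ Set.Ioo (0 : ℝ) 1 := by
          constructor <;> nlinarith
        have := (huniq z hz3).unique (y₁ := (s + (1 - s) * μ, v))
          (y₂ := Classical.choose (huniq z hz3).exists) ⟨hIoo', hvc, hzeq⟩ ⟨hIoo, hwc, hceq⟩
        have hfst : s + (1 - s) * μ = c := congrArg Prod.fst this
        nlinarith
  -- the compact convex set K of sub-decompositions
  set K : Set (E × ℝ) :=
    (fun p : ℝ × E => (p.1 • x + (1 - p.1) • p.2, p.1)) '' (Set.Icc 0 1 ×ˢ X) with hK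
  have hKmem : ∀ s : ℝ, ∀ w : E, s ∈ Set.Icc (0:ℝ) 1 → w ∈ X →
      (s • x + (1 - s) • w, s) ∈ K := fun s w hs hw => ⟨(s, w), ⟨hs, hw⟩, rfl⟩
  have hKc : IsCompact K := (isCompact_Icc.prod hXc).image (by fun_prop)
  have hKconv : Convex ℝ K := by
    rintro - ⟨⟨s1, w1⟩, ⟨hs1, hw1⟩, rfl⟩ - ⟨⟨s2, w2⟩, ⟨hs2, hw2⟩, rfl⟩ a b ha hb hab
    obtain ⟨hs10, hs11⟩ := hs1
    obtain ⟨hs20, hs21⟩ := hs2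
    set s := a * s1 + b * s2 with hsdef
    have hsmem : s ∈ Set.Icc (0:ℝ) 1 := ⟨by positivity, by nlinarith⟩
    set α := a * (1 - s1) with hα
    set β := b * (1 - s2) with hβ
    have hα0 : 0 ≤ α := mul_nonneg ha (by linarith)
    have hβ0 : 0 ≤ β := mul_nonneg hb (by linarith)
    have hαβ : α + β = 1 - s := by rw [hα, hβ, hsdef]; linear_combination hab
    have hexp : ∀ w1 w2 : E, a • (s1 • x + (1 - s1) • w1) + b • (s2 • x + (1 - s2) • w2)
        = (a * s1 + b * s2) • x + (a * (1 - s1)) • w1 + (b * (1 - s2)) • w2 := by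
      intro w1 w2; module
    rcases eq_or_lt_of_le (add_nonneg hα0 hβ0) with hd | hd
    · -- degenerate: s = 1
      have hα' : α = 0 := by linarith [hα0, hβ0]
      have hβ' : β = 0 := by linarith [hα0, hβ0]
      have hs1'' : s = 1 := by linarith
      have hcomb : a • ((s1 • x + (1 - s1) • w1, s1) : E × ℝ)
          + b • ((s2 • x + (1 - s2) • w2, s2) : E × ℝ) = (s • x + (1 - s) • x, s) := by
        simp only [Prod.smul_mk, Prod.mk_add_mk, Prod.mk.injEq]
        constructor
        · rw [hexp, ← hα, ← hβ, ← hsdef, hα', hβ', hs1'']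
          simp
        · simp only [smul_eq_mul, hsdef]
      rw [hcomb]
      exact hKmem s x hsmem hxX
    · -- nondegenerate
      set w := (α / (α + β)) • w1 + (β / (α + β)) • w2 with hw
      have hwX : w ∈ X := hXconv hw1 hw2 (by positivity) (by positivity)
        (by field_simp)
      have hcomb : a • ((s1 • x + (1 - s1) • w1, s1) : E × ℝ)
          + b • ((s2 • x + (1 - s2) • w2, s2) : E × ℝ) = (s • x + (1 - s) • w, s) := by
        simp only [Prod.smul_mk, Prod.mk_add_mk, Prod.mk.injEq]
        have hd' : α + β ≠ 0 := ne_of_gt hd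
        have e1 : (1 - s) * (α / (α + β)) = α := by rw [← hαβ]; field_simp
        have e2 : (1 - s) * (β / (α + β)) = β := by rw [← hαβ]; field_simp
        constructor
        · rw [hexp, ← hα, ← hβ, ← hsdef, hw, smul_add, smul_smul, smul_smul, e1, e2,
            add_assoc]
        · simp only [smul_eq_mul, hsdef]
      rw [hcomb]
      exact hKmem s w hsmem hwX
  -- Hahn-Banach: admissible functions nearly attaining lam
  have hHB : ∀ z ∈ X, ∀ t' : ℝ, lam z < t' → ∃ h : E →ᵃ[ℝ] ℝ, ContinuousOn (⇑h) X ∧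
      (∀ w ∈ X, (if w = x then (1:ℝ) else 0) < h w) ∧ h z < t' := by
    intro z hz t' ht'
    have hnot : ((z, t') : E × ℝ) ∉ K := by
      rintro ⟨⟨s, w⟩, ⟨hs, hw⟩, hpe⟩
      simp only [Prod.mk.injEq] at hpe
      obtain ⟨hpe1, hpe2⟩ := hpe
      have := hmax z hz s hs.1 hs.2 w hw hpe1.symm
      rw [hpe2] at this
      linarith
    obtain ⟨f, u, hfu, hfK⟩ := geometric_hahn_banach_point_closed hKconv hKc.isClosed hnot
    set f₁ : E →L[ℝ] ℝ := f.comp (ContinuousLinearMap.inl ℝ E ℝ) with hf₁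
    set c : ℝ := f (0, 1) with hc
    have hfsplit : ∀ w : E, ∀ s : ℝ, f (w, s) = f₁ w + s * c := by
      intro w s
      have h1 : ((w, s) : E × ℝ) = (w, (0:ℝ)) + s • ((0:E), (1:ℝ)) := by
        simp [Prod.smul_mk]
      rw [h1, map_add, map_smul, smul_eq_mul]
      rfl
    obtain ⟨hl0, hl1, w₀, hw₀X, -, hzdec⟩ := hdecomp z hz
    have hmemz : ((z, lam z) : E × ℝ) ∈ K := by
      have := hKmem (lam z) w₀ ⟨hl0, hl1⟩ hw₀X
      rwa [← hzdec] at this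
    have hcneg : c < 0 := by
      have h1 := hfK _ hmemz
      rw [hfsplit] at h1
      rw [hfsplit] at hfu
      nlinarith
    have hcne : c ≠ 0 := ne_of_lt hcneg
    set h : E →ᵃ[ℝ] ℝ :=
      LinearMap.toAffineMap ((-c⁻¹) • (f₁ : E →ₗ[ℝ] ℝ)) + AffineMap.const ℝ E (u / c)
      with hhdef
    have hval : ∀ w : E, h w = (u - f₁ w) / c := by
      intro w
      simp only [hhdef, AffineMap.coe_add, Pi.add_apply, LinearMap.coe_toAffineMap,
        LinearMap.smul_apply, ContinuousLinearMap.coe_coe, AffineMap.coe_const,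
        Function.const_apply, smul_eq_mul]
      field_simp
      ring
    have hcont : Continuous (⇑h) :=
      ((continuous_const.sub f₁.continuous).div_const c).congr fun w => (hval w).symm
    refine ⟨h, hcont.continuousOn, ?_, ?_⟩
    · intro w hw
      have hmem : ((w, if w = x then (1:ℝ) else 0) : E × ℝ) ∈ K := by
        split_ifs with hwx
        · subst hwx
          have := hKmem 1 w ⟨zero_le_one, le_refl 1⟩ hw
          simpa using this
        · have := hKmem 0 w ⟨le_refl 0, zero_le_one⟩ hw
          simpa using this
      have h1 := hfK _ hmem
      rw [hfsplit] at h1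
      rw [hval, lt_div_iff_of_neg hcneg]
      linarith
    · rw [hfsplit] at hfu
      rw [hval, div_lt_iff_of_neg hcneg]
      linarith
  -- the envelope equals lam on X
  have hXg : ∀ z ∈ X, hX z = lam z := by
    intro z hz
    rw [hXS]
    refine le_antisymm ?_ ?_
    · refine le_of_forall_gt_imp_ge_of_dense ?_
      intro t' ht'
      obtain ⟨h, hc, hgt, hlt⟩ := hHB z hz t' ht'
      exact le_trans (csInf_le (hBdd z hz) ⟨h, hc, hgt, rfl⟩) hlt.le
    · refine le_csInf (hSne z) ?_
      rintro r ⟨h, -, hgt, rfl⟩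
      obtain ⟨hl0, hl1, w₀, hw₀X, -, hzdec⟩ := hdecomp z hz
      have := hBnd (lam z) hl0 hl1 w₀ hw₀X h hgt
      rwa [← hzdec] at this
  refine ⟨?_, ?_, ?_, ?_⟩
  · -- upper semicontinuity
    intro z hz y hy
    rw [hXS] at hy
    obtain ⟨r, ⟨h, hc, hgt, rfl⟩, hr⟩ := exists_lt_of_csInf_lt (hSne z) hy
    have hev : ∀ᶠ w in nhdsWithin z X, h w < y := (hc z hz).eventually_lt_const hr
    filter_upwards [hev, self_mem_nhdsWithin] with w hw1 hw2
    calc hX w ≤ h w := by rw [hXS]; exact csInf_le (hBdd w hw2) ⟨h, hc, hgt, rfl⟩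
      _ < y := hw1
  · -- affinity
    intro p hp q hq t ht0 ht1
    obtain ⟨ha0, ha1, wp, hwpX, hwpor, hpdec⟩ := hdecomp p hp
    obtain ⟨hb0, hb1, wq, hwqX, hwqor, hqdec⟩ := hdecomp q hq
    obtain ⟨c, α, β, hcdef, hα, hβ⟩ : ∃ c α β : ℝ, c = t * lam p + (1 - t) * lam q ∧
        α = t * (1 - lam p) ∧ β = (1 - t) * (1 - lam q) := ⟨_, _, _, rfl, rfl, rfl⟩
    have hα0 : 0 ≤ α := by rw [hα]; exact mul_nonneg ht0 (by linarith)
    have hβ0 : 0 ≤ β := by rw [hβ]; exact mul_nonneg (by linarith) (by linarith)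
    have hαβ : α + β = 1 - c := by rw [hα, hβ, hcdef]; ring
    have hrX : t • p + (1 - t) • q ∈ X := hXconv hp hq ht0 (by linarith) (by ring)
    have hrexp : t • p + (1 - t) • q = c • x + α • wp + β • wq := by
      rw [hpdec, hqdec, hcdef, hα, hβ]; module
    rw [hXg p hp, hXg q hq, hXg _ hrX]
    suffices hsuff : lam (t • p + (1 - t) • q) = c by rw [hsuff, hcdef]
    rcases eq_or_lt_of_le (add_nonneg hα0 hβ0) with hd | hd
    · -- degenerate : the combination is x itself
      have hα' : α = 0 := by linarith
      have hβ' : β = 0 := by linarith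
      have hc1 : c = 1 := by linarith
      have hre : t • p + (1 - t) • q = x := by
        rw [hrexp, hα', hβ', hc1]; simp
      rw [hre, hlamx, hc1]
    · have hc1 : c < 1 := by linarith
      have hc0 : 0 ≤ c := by
        rw [hcdef]; exact add_nonneg (mul_nonneg ht0 ha0) (mul_nonneg (by linarith) hb0)
      obtain ⟨w, hwc, hrdec⟩ :
          ∃ w ∈ compl, t • p + (1 - t) • q = c • x + (1 - c) • w := by
        rcases eq_or_lt_of_le hα0 with hα' | hα'
        · have hβ' : 0 < β := by linarith
          have hwqc : wq ∈ compl := by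
            rcases hwqor with h1 | h1
            · exfalso
              have : β = 0 := by rw [hβ, h1]; ring
              linarith
            · exact h1
          have hβc : β = 1 - c := by linarith
          exact ⟨wq, hwqc, by rw [hrexp, ← hα', hβc, zero_smul, add_zero]⟩
        · rcases eq_or_lt_of_le hβ0 with hβ' | hβ'
          · have hwpc : wp ∈ compl := by
              rcases hwpor with h1 | h1
              · exfalso
                have : α = 0 := by rw [hα, h1]; ring
                linarith
              · exact h1
            have hαc : α = 1 - c := by linarith
            exact ⟨wp, hwpc, by rw [hrexp, ← hβ', hαc, zero_smul, add_zero]⟩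
          · have hwpc : wp ∈ compl := by
              rcases hwpor with h1 | h1
              · exfalso
                have : α = 0 := by rw [hα, h1]; ring
                linarith
              · exact h1
            have hwqc : wq ∈ compl := by
              rcases hwqor with h1 | h1
              · exfalso
                have : β = 0 := by rw [hβ, h1]; ring
                linarith
              · exact h1
            have hd' : α + β ≠ 0 := ne_of_gt hd
            refine ⟨(α / (α + β)) • wp + (β / (α + β)) • wq,
              hcomplConv hwpc hwqc (by positivity) (by positivity) (by field_simp), ?_⟩
            have e1 : (1 - c) * (α / (α + β)) = α := by rw [← hαβ]; field_simp
            have e2 : (1 - c) * (β / (α + β)) = β := by rw [← hαβ]; field_simp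
            rw [hrexp, smul_add, smul_smul, smul_smul, e1, e2, add_assoc]
      rcases eq_or_lt_of_le hc0 with hc0' | hc0'
      · have hre : t • p + (1 - t) • q = w := by rw [hrdec, ← hc0']; simp
        rw [hre, hlamc w hwc, ← hc0']
      · have hrne : t • p + (1 - t) • q ≠ x := by
          intro he
          rw [he] at hrdec
          have hmem : x ∈ openSegment ℝ x w :=
            ⟨c, 1 - c, hc0', by linarith, by ring, hrdec.symm⟩
          have hwx := hx.2 (hcomplX hwc) hxX (by rwa [openSegment_symm] at hmem)
          exact hxnc (hwx ▸ hwc)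
        have hrnc : t • p + (1 - t) • q ∉ compl := fun hrc =>
          hface _ hrc c hc0' (le_of_lt hc1) w (hcomplX hwc) hrdec
        have hr3 := hmem3 _ hrX hrne hrnc
        have hspec := Classical.choose_spec (huniq _ hr3).exists
        have huq := (huniq _ hr3).unique (y₁ := (c, w))
          (y₂ := Classical.choose (huniq _ hr3).exists) ⟨⟨hc0', hc1⟩, hwc, hrdec⟩ hspec
        rw [hlam3 _ hr3]
        exact (congrArg Prod.fst huq).symm
  · rw [hXg x hxX, hlamx]
  · intro z hz
    rw [hXg z (hcomplX hz), hlamc z hz]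
end
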